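/- Under the SARG constraints R₁(1−Q₁) ≤ p₁/4, R₂(1−Q₂) ≤ p₂/4, R₁(1−Q₁) + R₂(1−Q₂) ≥ C := R_μ(1−Q_μ) − (1/4)Σ_{n≥3} p_n, and R₁Q₁ + R₂Q₂ ≤ R_μQ_μ: if C > 0 and the functions S₁, S₂ are nonnegative and nonincreasing on their domains, then there exists a minimizer of R₁S₁(Q₁) + R₂S₂(Q₂) over the feasible set satisfying R₁(1−Q₁) + R₂(1−Q₂) = C (i.e., the third constraint is tight at the optimum). -/
import Mathlib


/-- SARG weak-coherent-pulse optimization: under the constraints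
`R₁(1−Q₁) ≤ p₁/4`, `R₂(1−Q₂) ≤ p₂/4`, `R₁(1−Q₁) + R₂(1−Q₂) ≥ C`, `R₁Q₁ + R₂Q₂ ≤ R_μQ_μ`
(with `R₁, R₂ ≥ 0`, `Q₁, Q₂ ∈ [0,1]`), if `C > 0` and `S₁, S₂` are nonnegative and
nonincreasing on `[0,1]`, then the infimum of `R₁S₁(Q₁) + R₂S₂(Q₂)` over the feasible set
is not changed by additionally requiring the third constraint to be tight, i.e. the
optimum is attained (in the infimum sense) on `R₁(1−Q₁) + R₂(1−Q₂) = C`. -/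
theorem sarg_wcp_third_constraint_tight
    (p1 p2 RmuQmu C : ℝ) (hC : 0 < C) (hRQ : 0 ≤ RmuQmu)
    (S1 S2 : ℝ → ℝ)
    (hS1n : ∀ x ∈ Set.Icc (0 : ℝ) 1, 0 ≤ S1 x)
    (hS2n : ∀ x ∈ Set.Icc (0 : ℝ) 1, 0 ≤ S2 x)
    (hS1a : AntitoneOn S1 (Set.Icc (0 : ℝ) 1))
    (hS2a : AntitoneOn S2 (Set.Icc (0 : ℝ) 1)) :
    sInf {r : ℝ | ∃ R1 Q1 R2 Q2 : ℝ,
        0 ≤ R1 ∧ 0 ≤ R2 ∧ 0 ≤ Q1 ∧ Q1 ≤ 1 ∧ 0 ≤ Q2 ∧ Q2 ≤ 1 ∧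
        R1 * (1 - Q1) ≤ p1 / 4 ∧ R2 * (1 - Q2) ≤ p2 / 4 ∧
        C ≤ R1 * (1 - Q1) + R2 * (1 - Q2) ∧
        R1 * Q1 + R2 * Q2 ≤ RmuQmu ∧
        r = R1 * S1 Q1 + R2 * S2 Q2}
    = sInf {r : ℝ | ∃ R1 Q1 R2 Q2 : ℝ,
        0 ≤ R1 ∧ 0 ≤ R2 ∧ 0 ≤ Q1 ∧ Q1 ≤ 1 ∧ 0 ≤ Q2 ∧ Q2 ≤ 1 ∧
        R1 * (1 - Q1) ≤ p1 / 4 ∧ R2 * (1 - Q2) ≤ p2 / 4 ∧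
        R1 * (1 - Q1) + R2 * (1 - Q2) = C ∧
        R1 * Q1 + R2 * Q2 ≤ RmuQmu ∧
        r = R1 * S1 Q1 + R2 * S2 Q2} := by
  set F : Set ℝ := {r : ℝ | ∃ R1 Q1 R2 Q2 : ℝ,
        0 ≤ R1 ∧ 0 ≤ R2 ∧ 0 ≤ Q1 ∧ Q1 ≤ 1 ∧ 0 ≤ Q2 ∧ Q2 ≤ 1 ∧
        R1 * (1 - Q1) ≤ p1 / 4 ∧ R2 * (1 - Q2) ≤ p2 / 4 ∧
        C ≤ R1 * (1 - Q1) + R2 * (1 - Q2) ∧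
        R1 * Q1 + R2 * Q2 ≤ RmuQmu ∧
        r = R1 * S1 Q1 + R2 * S2 Q2} with hF
  set T : Set ℝ := {r : ℝ | ∃ R1 Q1 R2 Q2 : ℝ,
        0 ≤ R1 ∧ 0 ≤ R2 ∧ 0 ≤ Q1 ∧ Q1 ≤ 1 ∧ 0 ≤ Q2 ∧ Q2 ≤ 1 ∧
        R1 * (1 - Q1) ≤ p1 / 4 ∧ R2 * (1 - Q2) ≤ p2 / 4 ∧
        R1 * (1 - Q1) + R2 * (1 - Q2) = C ∧
        R1 * Q1 + R2 * Q2 ≤ RmuQmu ∧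
        r = R1 * S1 Q1 + R2 * S2 Q2} with hT
  have hsub : T ⊆ F := by
    rintro r ⟨R1, Q1, R2, Q2, h1, h2, h3, h4, h5, h6, h7, h8, h9, h10, h11⟩
    exact ⟨R1, Q1, R2, Q2, h1, h2, h3, h4, h5, h6, h7, h8, h9.ge, h10, h11⟩
  -- every element of F is ≥ 0
  have hFnn : ∀ r ∈ F, 0 ≤ r := by
    rintro r ⟨R1, Q1, R2, Q2, h1, h2, h3, h4, h5, h6, _, _, _, _, h11⟩
    have := hS1n Q1 ⟨h3, h4⟩
    have := hS2n Q2 ⟨h5, h6⟩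
    nlinarith
  have hFbdd : BddBelow F := ⟨0, hFnn⟩
  have hTbdd : BddBelow T := hFbdd.mono hsub
  -- from each feasible point, construct a tight point with smaller value
  have key : ∀ r ∈ F, ∃ r' ∈ T, r' ≤ r := by
    rintro r ⟨R1, Q1, R2, Q2, h1, h2, h3, h4, h5, h6, h7, h8, h9, h10, h11⟩
    set A := R1 * (1 - Q1) + R2 * (1 - Q2) with hA
    have hApos : 0 < A := lt_of_lt_of_le hC h9
    set t := C / A with ht
    have ht0 : 0 ≤ t := le_of_lt (div_pos hC hApos)
    have ht1 : t ≤ 1 := (div_le_one hApos).2 h9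
    have hx1 : 0 ≤ R1 * (1 - Q1) := mul_nonneg h1 (by linarith)
    have hx2 : 0 ≤ R2 * (1 - Q2) := mul_nonneg h2 (by linarith)
    have hS1 := hS1n Q1 ⟨h3, h4⟩
    have hS2 := hS2n Q2 ⟨h5, h6⟩
    refine ⟨t * R1 * S1 Q1 + t * R2 * S2 Q2,
      ⟨t * R1, Q1, t * R2, Q2, mul_nonneg ht0 h1, mul_nonneg ht0 h2,
        h3, h4, h5, h6, ?_, ?_, ?_, ?_, rfl⟩, ?_⟩
    · nlinarith
    · nlinarith
    · have : t * A = C := div_mul_cancel₀ C (ne_of_gt hApos)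
      nlinarith
    · have hy : 0 ≤ R1 * Q1 + R2 * Q2 := by positivity
      nlinarith
    · subst h11
      nlinarith [mul_nonneg (mul_nonneg (sub_nonneg.2 ht1) h1) hS1, mul_nonneg (mul_nonneg (sub_nonneg.2 ht1) h2) hS2]
  apply le_antisymm
  · rcases Set.eq_empty_or_nonempty F with hFe | hFne
    · have hTe : T = ∅ := Set.eq_empty_of_subset_empty (hFe ▸ hsub)
      rw [hFe, hTe]
    · rcases hFne with ⟨r, hr⟩
      obtain ⟨r', hr', _⟩ := key r hr
      exact csInf_le_csInf hFbdd ⟨r', hr'⟩ hsub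
  · rcases Set.eq_empty_or_nonempty F with hFe | hFne
    · have hTe : T = ∅ := Set.eq_empty_of_subset_empty (hFe ▸ hsub)
      rw [hFe, hTe]
    · refine le_csInf hFne ?_
      intro r hr
      obtain ⟨r', hr', hle⟩ := key r hr
      exact le_trans (csInf_le hTbdd hr') hle
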